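/- Let π be the uniform distribution on {0,1}ⁿ and for i ∈ [n'] let πⁱ be the distribution assigning mass (1+(-1)^{x_i}ε)/2ⁿ to each string x, where 0 ≤ ε ≤ 1. Then 1 + χ²( E_{i∼[n']}[(πⁱ)^⊗N] ‖ π^⊗N ) = (1/n')(1+ε²)^N + (n'-1)/n', so the chi-squared divergence of the uniform mixture of N-fold products from the N-fold uniform distribution equals (1/n')((1+ε²)^N - 1). -/

import Mathlib

open scoped BigOperators

open Finset

private def sgn (b : Bool) : ℝ := if b then -1 else 1

private lemma sgn_not (b : Bool) : sgn (!b) = - sgn b := by cases b <;> simp [sgn]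

private lemma flip_sum {n : ℕ} (k : Fin n) (f : (Fin n → Bool) → ℝ)
    (h : ∀ x, f (Function.update x k (!(x k))) = - f x) :
    ∑ x : Fin n → Bool, f x = 0 := by
  have hinv : Function.Involutive
      (fun x : Fin n → Bool => Function.update x k (!(x k))) := by
    intro x
    funext j
    by_cases hj : j = k
    · subst hj; simp
    · simp [Function.update_of_ne hj]
  have h1 : ∑ x : Fin n → Bool, f x
      = ∑ x : Fin n → Bool, f (Function.update x k (!(x k))) := by
    exact (Equiv.sum_comp hinv.toPerm f).symm
  have h2 : ∑ x : Fin n → Bool, f (Function.update x k (!(x k)))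
      = - ∑ x : Fin n → Bool, f x := by
    simp only [h]
    exact Finset.sum_neg_distrib _
  rw [h2] at h1
  linarith

private lemma sum_sgn {n : ℕ} (k : Fin n) :
    ∑ x : Fin n → Bool, sgn (x k) = 0 := by
  refine flip_sum k _ (fun x => ?_)
  simp [sgn_not]

private lemma sum_sgn_sgn {n : ℕ} {k k' : Fin n} (h : k ≠ k') :
    ∑ x : Fin n → Bool, sgn (x k) * sgn (x k') = 0 := by
  refine flip_sum k _ (fun x => ?_)
  rw [Function.update_self, Function.update_of_ne h.symm, sgn_not]
  ring

private lemma sum_one {n : ℕ} :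
    ∑ _x : Fin n → Bool, (1 : ℝ) = 2 ^ n := by
  simp [Finset.card_univ]

private lemma pair_sum {n : ℕ} (k k' : Fin n) (ε : ℝ) :
    ∑ x : Fin n → Bool, (1 + sgn (x k) * ε) * (1 + sgn (x k') * ε)
      = if k = k' then 2 ^ n * (1 + ε ^ 2) else 2 ^ n := by
  have expand : ∀ x : Fin n → Bool,
      (1 + sgn (x k) * ε) * (1 + sgn (x k') * ε)
        = 1 + ε * sgn (x k) + ε * sgn (x k') + ε ^ 2 * (sgn (x k) * sgn (x k')) :=
    fun x => by ring
  simp only [expand]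
  rw [Finset.sum_add_distrib, Finset.sum_add_distrib, Finset.sum_add_distrib,
    ← Finset.mul_sum, ← Finset.mul_sum, ← Finset.mul_sum, sum_sgn, sum_sgn, sum_one]
  by_cases h : k = k'
  · subst h
    have hsq : ∀ x : Fin n → Bool, sgn (x k) * sgn (x k) = 1 :=
      fun x => by cases x k <;> norm_num [sgn]
    rw [if_pos rfl]
    simp only [hsq]
    rw [sum_one]
    ring
  · rw [if_neg h, sum_sgn_sgn h]
    ring

private lemma sum_pow {A : Type*} [Fintype A] [DecidableEq A] (N : ℕ) (F : A → ℝ) :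
    ∑ X : Fin N → A, ∏ j : Fin N, F (X j) = (∑ a : A, F a) ^ N := by
  have := Finset.prod_univ_sum (fun _ : Fin N => (Finset.univ : Finset A))
    (fun _ a => F a)
  rw [Fintype.piFinset_univ] at this
  rw [← this, Finset.prod_const, Finset.card_univ, Fintype.card_fin]

/-- Chi-squared divergence computation: for the uniform distribution `π` on `{0,1}^n`
and the perturbed distributions `π^i` with mass `(1 + (-1)^{x_i} ε)/2^n`, the mixture
over `i ∈ [n']` of `N`-fold products satisfies
`1 + χ²(E_i[(π^i)^⊗N] ‖ π^⊗N) = (1/n')(1+ε²)^N + (n'-1)/n'`. -/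
theorem chi_squared_mixture (n n' N : ℕ) (hn' : 1 ≤ n') (hn : n' ≤ n) (hN : 1 ≤ N)
    (ε : ℝ) (hε0 : 0 ≤ ε) (hε1 : ε ≤ 1) :
    ∑ X : Fin N → (Fin n → Bool),
        ((1 / (n' : ℝ)) * ∑ i : Fin n',
            ∏ j : Fin N,
              (1 + (if X j (Fin.castLE hn i) then -1 else 1) * ε) / 2 ^ n) ^ 2
          / ((1 / 2 ^ n : ℝ)) ^ N
      = (1 / (n' : ℝ)) * (1 + ε ^ 2) ^ N + ((n' : ℝ) - 1) / n' := by
  have hn'0 : ((n' : ℝ)) ≠ 0 := by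
    have : (0:ℝ) < n' := by exact_mod_cast hn'
    exact ne_of_gt this
  have h2n : ((2:ℝ) ^ n) ≠ 0 := by positivity
  simp only [show ∀ b : Bool, (if b then (-1:ℝ) else 1) = sgn b from fun b => rfl]
  have key : ∀ i i' : Fin n',
      ∑ X : Fin N → (Fin n → Bool),
        (∏ j : Fin N, (1 + sgn (X j (Fin.castLE hn i)) * ε) / 2 ^ n) *
        (∏ j : Fin N, (1 + sgn (X j (Fin.castLE hn i')) * ε) / 2 ^ n)
      = (if i = i' then ((1 + ε ^ 2) / 2 ^ n : ℝ) else 1 / 2 ^ n) ^ N := by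
    intro i i'
    simp only [← Finset.prod_mul_distrib]
    rw [_root_.sum_pow N (fun a : Fin n → Bool => (1 + sgn (a (Fin.castLE hn i)) * ε) / 2 ^ n *
      ((1 + sgn (a (Fin.castLE hn i')) * ε) / 2 ^ n))]
    congr 1
    have hsum : ∑ x : Fin n → Bool,
        (1 + sgn (x (Fin.castLE hn i)) * ε) / 2 ^ n *
          ((1 + sgn (x (Fin.castLE hn i')) * ε) / 2 ^ n)
      = (∑ x : Fin n → Bool,
          (1 + sgn (x (Fin.castLE hn i)) * ε) *
            (1 + sgn (x (Fin.castLE hn i')) * ε)) / (2 ^ n * 2 ^ n) := by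
      rw [Finset.sum_div]
      exact Finset.sum_congr rfl fun x _ => by ring
    rw [hsum, pair_sum]
    by_cases h : i = i'
    · subst h
      rw [if_pos rfl, if_pos rfl]
      field_simp
    · rw [if_neg (fun hc => h (Fin.castLE_injective hn hc)), if_neg h]
      field_simp
  calc ∑ X : Fin N → (Fin n → Bool),
        ((1 / (n' : ℝ)) * ∑ i : Fin n',
            ∏ j : Fin N, (1 + sgn (X j (Fin.castLE hn i)) * ε) / 2 ^ n) ^ 2
          / ((1 / 2 ^ n : ℝ)) ^ N
      = ∑ X : Fin N → (Fin n → Bool),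
          (1 / (n' : ℝ) ^ 2) * ((2:ℝ) ^ n) ^ N *
            ∑ i : Fin n', ∑ i' : Fin n',
              (∏ j : Fin N, (1 + sgn (X j (Fin.castLE hn i)) * ε) / 2 ^ n) *
              (∏ j : Fin N, (1 + sgn (X j (Fin.castLE hn i')) * ε) / 2 ^ n) := by
        refine Finset.sum_congr rfl fun X _ => ?_
        rw [mul_pow, sq (∑ i : Fin n', ∏ j : Fin N, (1 + sgn (X j (Fin.castLE hn i)) * ε) / 2 ^ n),
          Finset.sum_mul_sum, one_div ((2:ℝ) ^ n), inv_pow, div_eq_mul_inv, inv_inv]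
        ring
    _ = (1 / (n' : ℝ) ^ 2) * ((2:ℝ) ^ n) ^ N *
          ∑ i : Fin n', ∑ i' : Fin n',
            ∑ X : Fin N → (Fin n → Bool),
              (∏ j : Fin N, (1 + sgn (X j (Fin.castLE hn i)) * ε) / 2 ^ n) *
              (∏ j : Fin N, (1 + sgn (X j (Fin.castLE hn i')) * ε) / 2 ^ n) := by
        rw [← Finset.mul_sum]
        congr 1
        rw [Finset.sum_comm]
        exact Finset.sum_congr rfl fun i _ => Finset.sum_comm
    _ = (1 / (n' : ℝ) ^ 2) *
          ∑ i : Fin n', ∑ i' : Fin n',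
            (if i = i' then ((1 + ε ^ 2 : ℝ)) ^ N else 1) := by
        simp only [key]
        rw [mul_assoc, Finset.mul_sum]
        congr 1
        refine Finset.sum_congr rfl fun i _ => ?_
        rw [Finset.mul_sum]
        refine Finset.sum_congr rfl fun i' _ => ?_
        by_cases h : i = i'
        · rw [if_pos h, if_pos h, div_pow, mul_div_cancel₀ _ (by positivity)]
        · rw [if_neg h, if_neg h, div_pow, one_pow, mul_one_div, div_self (by positivity)]
    _ = (1 / (n' : ℝ)) * (1 + ε ^ 2) ^ N + ((n' : ℝ) - 1) / n' := by
        have inner : ∀ i : Fin n',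
            ∑ i' : Fin n', (if i = i' then ((1 + ε ^ 2 : ℝ)) ^ N else 1)
              = ((1 + ε ^ 2) ^ N - 1) + n' := by
          intro i
          have hsplit : ∀ i' : Fin n',
              (if i = i' then ((1 + ε ^ 2 : ℝ)) ^ N else 1)
                = (if i = i' then ((1 + ε ^ 2 : ℝ)) ^ N - 1 else 0) + 1 :=
            fun i' => by by_cases h : i = i' <;> simp [h]
          simp only [hsplit]
          rw [Finset.sum_add_distrib, Finset.sum_ite_eq, Finset.sum_const]
          simp [Finset.card_univ]
        simp only [inner]
        rw [Finset.sum_const, Finset.card_univ, Fintype.card_fin]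
        field_simp
        ring
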